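/- Let $c_1, \ldots, c_\nu \in \mathbb{Q}^*_{>0}$ be multiplicatively independent. Then the following are equivalent: (a) whenever $c \in \langle c_1, \ldots, c_\nu \rangle$ one has $\widehat{c} \in \langle \widehat{c_1}, \ldots, \widehat{c_\nu} \rangle$; (b) the torsion subgroup of $\mathbb{Q}^*/\langle -1, c_1, \ldots, c_\nu \rangle$ is isomorphic to $\mathbb{Z}/m_{c_1} \oplus \cdots \oplus \mathbb{Z}/m_{c_\nu}$, generated by the classes of $\widehat{c_1}, \ldots, \widehat{c_\nu}$. -/

import Mathlib

open scoped Classical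

/-- `mRoot x` is the largest `m` such that `x` has a positive rational `m`-th root. -/
noncomputable def mRoot (x : ℚ) : ℕ :=
  sSup {m : ℕ | ∃ y : ℚ, 0 < y ∧ y ^ m = x}

/-- `hatRootU x` is a positive rational unit with `(hatRootU x) ^ (mRoot x) = x`
(when one exists). -/
noncomputable def hatRootU (x : ℚˣ) : ℚˣ :=
  if h : ∃ y : ℚˣ, 0 < (y : ℚ) ∧ y ^ mRoot (x : ℚ) = x then h.choose else 1

lemma nat_exists_pow_of_dvd_factorization {a k : ℕ} (ha : a ≠ 0) (hk : k ≠ 0)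
    (h : ∀ p, k ∣ a.factorization p) : ∃ u : ℕ, u ^ k = a := by
  refine ⟨Nat.floorRoot k a, Nat.dvd_antisymm Nat.floorRoot_pow_dvd ?_⟩
  have hu : Nat.floorRoot k a ≠ 0 := Nat.floorRoot_ne_zero.2 ⟨hk, ha⟩
  rw [← Nat.factorization_le_iff_dvd ha (pow_ne_zero _ hu), Nat.factorization_pow,
    Nat.factorization_floorRoot]
  intro p
  simp only [Finsupp.smul_apply, Finsupp.floorDiv_apply, smul_eq_mul]
  rw [Nat.floorDiv_eq_div]
  exact (Nat.mul_div_cancel' (h p)).ge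

lemma nat_pow_lcm {a s t n m : ℕ} (ha : a ≠ 0) (hn : n ≠ 0) (hm : m ≠ 0)
    (hs : s ^ n = a) (ht : t ^ m = a) : ∃ u : ℕ, u ^ Nat.lcm n m = a := by
  refine nat_exists_pow_of_dvd_factorization ha (Nat.lcm_ne_zero hn hm) fun p => Nat.lcm_dvd ?_ ?_
  · rw [← hs, Nat.factorization_pow, Finsupp.smul_apply, smul_eq_mul]
    exact dvd_mul_right _ _
  · rw [← ht, Nat.factorization_pow, Finsupp.smul_apply, smul_eq_mul]
    exact dvd_mul_right _ _

lemma rat_pow_left_inj {y z : ℚ} (hy : 0 < y) (hz : 0 < z) {n : ℕ} (hn : n ≠ 0)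
    (h : y ^ n = z ^ n) : y = z := by
  rcases lt_trichotomy y z with hlt | heq | hgt
  · exact absurd h (by have := pow_lt_pow_left₀ hlt hy.le hn; exact this.ne)
  · exact heq
  · exact absurd h (by have := pow_lt_pow_left₀ hgt hz.le hn; exact this.ne')

lemma rat_pow_lcm {x y z : ℚ} {n m : ℕ} (hx : 0 < x) (hn : n ≠ 0) (hm : m ≠ 0)
    (hy : 0 < y) (hz : 0 < z) (h1 : y ^ n = x) (h2 : z ^ m = x) :
    ∃ w : ℚ, 0 < w ∧ w ^ Nat.lcm n m = x := by
  have hxnum : (0:ℤ) < x.num := Rat.num_pos.2 hx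
  have hynum : (0:ℤ) < y.num := Rat.num_pos.2 hy
  have hznum : (0:ℤ) < z.num := Rat.num_pos.2 hz
  have h1n : y.num ^ n = x.num := by rw [← h1, Rat.num_pow]
  have h2n : z.num ^ m = x.num := by rw [← h2, Rat.num_pow]
  have h1d : y.den ^ n = x.den := by rw [← h1, Rat.den_pow]
  have h2d : z.den ^ m = x.den := by rw [← h2, Rat.den_pow]
  obtain ⟨u, hu⟩ : ∃ u : ℕ, u ^ Nat.lcm n m = x.num.natAbs := by
    exact nat_pow_lcm (s := y.num.natAbs) (t := z.num.natAbs) (by simpa using hxnum.ne') hn hm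
      (by rw [← Int.natAbs_pow, h1n]) (by rw [← Int.natAbs_pow, h2n])
  obtain ⟨v, hv⟩ : ∃ v : ℕ, v ^ Nat.lcm n m = x.den :=
    nat_pow_lcm x.den_nz hn hm h1d h2d
  have hL : Nat.lcm n m ≠ 0 := Nat.lcm_ne_zero hn hm
  have hu0 : 0 < u := by
    rcases Nat.eq_zero_or_pos u|>.symm with h | h
    · exact h
    · exfalso; rw [h, zero_pow hL] at hu; omega
  have hv0 : 0 < v := by
    rcases Nat.eq_zero_or_pos v|>.symm with h | h
    · exact h
    · exfalso
      rw [h, zero_pow hL] at hv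
      exact x.den_nz hv.symm
  refine ⟨(u : ℚ) / v, by positivity, ?_⟩
  rw [div_pow, ← Nat.cast_pow, ← Nat.cast_pow, hu, hv]
  have hcast : ((x.num.natAbs : ℕ) : ℚ) = (x.num : ℚ) := by
    rw [Nat.cast_natAbs, Int.cast_abs, abs_of_pos (by exact_mod_cast hxnum)]
  rw [hcast]
  exact Rat.num_div_den x

lemma mRoot_facts {x : ℚ} (hx : 0 < x) (hx1 : x ≠ 1) :
    (∃ y : ℚ, 0 < y ∧ y ^ mRoot x = x) ∧ 1 ≤ mRoot x ∧
      ∀ n, n ≠ 0 → ∀ y : ℚ, 0 < y → y ^ n = x → n ∣ mRoot x := by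
  have h1S : 1 ∈ {m : ℕ | ∃ y : ℚ, 0 < y ∧ y ^ m = x} := ⟨x, hx, pow_one x⟩
  have hbdd : BddAbove {m : ℕ | ∃ y : ℚ, 0 < y ∧ y ^ m = x} := by
    refine ⟨x.num.natAbs + x.den, fun m hm => ?_⟩
    obtain ⟨y, hy, hyx⟩ := hm
    have hynum : (0:ℤ) < y.num := Rat.num_pos.2 hy
    have hn' : y.num.natAbs ^ m = x.num.natAbs := by rw [← Int.natAbs_pow, ← Rat.num_pow, hyx]
    have hd' : y.den ^ m = x.den := by rw [← Rat.den_pow, hyx]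
    have hxnum : (0:ℤ) < x.num := Rat.num_pos.2 hx
    rcases Nat.lt_or_ge x.num.natAbs 2 with hx2 | hx2
    · have hden : 2 ≤ x.den := by
        by_contra hcon
        have hd1 : x.den = 1 := by have := x.pos; omega
        have hn1 : x.num = 1 := by omega
        refine hx1 ?_
        have : x = (x.num : ℚ) / (x.den : ℚ) := (Rat.num_div_den x).symm
        rw [this, hn1, hd1]; norm_num
      have hy2 : 2 ≤ y.den := by
        by_contra hcon
        have hyd1 : y.den = 1 := by have := y.pos; omega
        rw [hyd1, Nat.one_pow] at hd'; omega
      have hlt : m < 2 ^ m := Nat.lt_two_pow_self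
      have hle2 : 2 ^ m ≤ x.den := hd' ▸ Nat.pow_le_pow_left hy2 m
      omega
    · have hy2 : 2 ≤ y.num.natAbs := by
        by_contra hcon
        have h1 : y.num.natAbs = 1 := by omega
        rw [h1, Nat.one_pow] at hn'; omega
      have hlt : m < 2 ^ m := Nat.lt_two_pow_self
      have hle2 : 2 ^ m ≤ x.num.natAbs := hn' ▸ Nat.pow_le_pow_left hy2 m
      omega
  have hmem : mRoot x ∈ {m : ℕ | ∃ y : ℚ, 0 < y ∧ y ^ m = x} :=
    Nat.sSup_mem ⟨1, h1S⟩ hbdd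
  have hle : 1 ≤ mRoot x := le_csSup hbdd h1S
  refine ⟨hmem, hle, fun n hn y hy hyx => ?_⟩
  obtain ⟨y0, hy0, hy0x⟩ := hmem
  obtain ⟨w, hw, hwx⟩ := rat_pow_lcm hx hn (by omega) hy hy0 hyx hy0x
  have hLle : Nat.lcm n (mRoot x) ≤ mRoot x := le_csSup hbdd ⟨w, hw, hwx⟩
  have hdr : mRoot x ∣ Nat.lcm n (mRoot x) := Nat.dvd_lcm_right _ _
  have hEq : Nat.lcm n (mRoot x) = mRoot x :=
    le_antisymm hLle (Nat.le_of_dvd (Nat.pos_of_ne_zero (Nat.lcm_ne_zero hn (by omega))) hdr)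
  exact hEq ▸ Nat.dvd_lcm_left _ _

lemma hatRootU_pos_pow {x : ℚˣ} (hx : 0 < (x:ℚ)) (hx1 : x ≠ 1) :
    0 < (hatRootU x : ℚ) ∧ hatRootU x ^ mRoot ((x : ℚ)) = x := by
  have hx1' : (x:ℚ) ≠ 1 := fun h => hx1 (Units.ext (by simpa using h))
  obtain ⟨⟨y, hy, hyx⟩, hle, hdvd⟩ := mRoot_facts hx hx1'
  have hex : ∃ y : ℚˣ, 0 < (y : ℚ) ∧ y ^ mRoot ((x : ℚ)) = x :=
    ⟨Units.mk0 y hy.ne', by simpa using hy, Units.ext (by simpa using hyx)⟩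
  rw [hatRootU, dif_pos hex]
  exact hex.choose_spec

lemma root_dvd_u {x y : ℚˣ} {n : ℕ} (hx : 0 < (x:ℚ)) (hx1 : x ≠ 1) (hn : n ≠ 0)
    (hy : 0 < (y:ℚ)) (h : y ^ n = x) :
    n ∣ mRoot ((x : ℚ)) ∧ y = hatRootU x ^ (mRoot ((x : ℚ)) / n) := by
  have hx1' : (x:ℚ) ≠ 1 := fun hh => hx1 (Units.ext (by simpa using hh))
  obtain ⟨hmem, hle, hdvd⟩ := mRoot_facts hx hx1'
  have hdvdn : n ∣ mRoot ((x : ℚ)) :=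
    hdvd n hn (y:ℚ) hy (by rw [← Units.val_pow_eq_pow_val, h])
  obtain ⟨hhpos, hhpow⟩ := hatRootU_pos_pow hx hx1
  refine ⟨hdvdn, Units.ext ?_⟩
  have key : (hatRootU x ^ (mRoot ((x : ℚ)) / n)) ^ n = x := by
    rw [← pow_mul, Nat.div_mul_cancel hdvdn, hhpow]
  refine rat_pow_left_inj hy ?_ hn ?_
  · rw [Units.val_pow_eq_pow_val]; positivity
  · rw [← Units.val_pow_eq_pow_val, ← Units.val_pow_eq_pow_val, h, key]

section Grp

variable {ν : ℕ} (c : Fin ν → ℚˣ)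

lemma prod_single_exp (h : Fin ν) (a : ℤ) :
    ∏ h', c h' ^ ((Pi.single h a : Fin ν → ℤ) h') = c h ^ a := by
  rw [Finset.prod_eq_single h (fun h' _ hne => by simp [Pi.single_eq_of_ne hne]) (by simp)]
  simp

/-- explicit description of the subgroup generated by `-1` and the `c h`. -/
def Hgrp : Subgroup ℚˣ where
  carrier := {g | ∃ (s : ℤ) (l : Fin ν → ℤ), g = (-1) ^ s * ∏ h, c h ^ l h}
  one_mem' := ⟨0, 0, by simp⟩
  mul_mem' := by
    rintro a b ⟨s, l, rfl⟩ ⟨s', l', rfl⟩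
    refine ⟨s + s', l + l', ?_⟩
    rw [zpow_add, show (∏ h, c h ^ (l + l') h) = (∏ h, c h ^ l h) * ∏ h, c h ^ l' h by
      rw [← Finset.prod_mul_distrib]
      exact Finset.prod_congr rfl fun h _ => by simp [zpow_add]]
    exact (mul_mul_mul_comm _ _ _ _).symm
  inv_mem' := by
    rintro a ⟨s, l, rfl⟩
    refine ⟨-s, -l, ?_⟩
    rw [mul_inv, zpow_neg]
    congr 1
    rw [← Finset.prod_inv_distrib]
    exact Finset.prod_congr rfl fun h _ => by simp [zpow_neg]

lemma mem_Hgrp {g : ℚˣ} :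
    g ∈ Hgrp c ↔ ∃ (s : ℤ) (l : Fin ν → ℤ), g = (-1) ^ s * ∏ h, c h ^ l h := Iff.rfl

lemma Ggrp_eq_Hgrp : Subgroup.closure ({-1} ∪ Set.range c) = Hgrp c := by
  apply le_antisymm
  · rw [Subgroup.closure_le]
    rintro g (hg | ⟨h, rfl⟩)
    · rw [Set.mem_singleton_iff] at hg
      subst hg
      rw [SetLike.mem_coe, mem_Hgrp]
      exact ⟨1, 0, by simp⟩
    · rw [SetLike.mem_coe, mem_Hgrp]
      exact ⟨0, Pi.single h 1, by simp [prod_single_exp]⟩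
  · rintro g hg
    rw [mem_Hgrp] at hg
    obtain ⟨s, l, rfl⟩ := hg
    have hm1 : (-1 : ℚˣ) ∈ Subgroup.closure ({-1} ∪ Set.range c) :=
      Subgroup.subset_closure (Set.mem_union_left _ rfl)
    have hch : ∀ h, c h ∈ Subgroup.closure ({-1} ∪ Set.range c) :=
      fun h => Subgroup.subset_closure (Set.mem_union_right _ ⟨h, rfl⟩)
    exact mul_mem (zpow_mem hm1 s) (prod_mem fun h _ => zpow_mem (hch h) _)

end Grp

section Core

variable {ν : ℕ} {c : Fin ν → ℚˣ}

lemma val_ne_one {x : ℚˣ} (hx : x ≠ 1) : (x : ℚ) ≠ 1 :=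
  fun h => hx (Units.ext (by simpa using h))

lemma c_ne_one (hindep : ∀ l : Fin ν → ℤ, ∏ h, c h ^ l h = 1 → l = 0) (h : Fin ν) :
    c h ≠ 1 := by
  intro hch
  have h1 : ∏ h', c h' ^ ((Pi.single h 1 : Fin ν → ℤ) h') = 1 := by
    rw [prod_single_exp]; simp [hch]
  have := congrFun (hindep _ h1) h
  simp at this

lemma b_spec (hpos : ∀ h, (0 : ℚ) < c h)
    (hindep : ∀ l : Fin ν → ℤ, ∏ h, c h ^ l h = 1 → l = 0) (h : Fin ν) :
    0 < (hatRootU (c h) : ℚ) ∧ hatRootU (c h) ^ mRoot ((c h : ℚ)) = c h :=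
  hatRootU_pos_pow (hpos h) (c_ne_one hindep h)

lemma m_pos (hpos : ∀ h, (0 : ℚ) < c h)
    (hindep : ∀ l : Fin ν → ℤ, ∏ h, c h ^ l h = 1 → l = 0) (h : Fin ν) :
    1 ≤ mRoot ((c h : ℚ)) :=
  (mRoot_facts (hpos h) (val_ne_one (c_ne_one hindep h))).2.1

lemma pow2' (a : ℚˣ) (t : ℤ) : (a ^ t) ^ (2:ℕ) = a ^ (2 * t) := by
  rw [← zpow_natCast (a ^ t) 2, ← zpow_mul]
  congr 1
  push_cast
  ring

lemma powM' (a : ℚˣ) (t : ℤ) (M : ℕ) : (a ^ t) ^ M = a ^ ((M:ℤ) * t) := by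
  rw [← zpow_natCast (a ^ t) M, ← zpow_mul]
  congr 1
  ring

lemma b_indep (hpos : ∀ h, (0 : ℚ) < c h)
    (hindep : ∀ l : Fin ν → ℤ, ∏ h, c h ^ l h = 1 → l = 0)
    (k : Fin ν → ℤ) (hk : ∏ h, hatRootU (c h) ^ k h = 1) : k = 0 := by
  set M : ℕ := ∏ h, mRoot ((c h : ℚ)) with hM
  have hMdvd : ∀ h, mRoot ((c h : ℚ)) ∣ M := fun h => Finset.dvd_prod_of_mem _ (Finset.mem_univ h)
  have hMpos : 0 < M := Finset.prod_pos fun h _ => m_pos hpos hindep h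
  have key : ∏ h, c h ^ (k h * ((M / mRoot ((c h : ℚ)) : ℕ) : ℤ)) = 1 := by
    have hc : ∀ h ∈ Finset.univ, c h ^ (k h * ((M / mRoot ((c h : ℚ)) : ℕ) : ℤ))
        = (hatRootU (c h) ^ k h) ^ M := by
      intro h _
      have hbm : hatRootU (c h) ^ (mRoot ((c h : ℚ)) : ℤ) = c h := by
        rw [zpow_natCast]; exact (b_spec hpos hindep h).2
      rw [powM']
      have hcc : (mRoot ((c h : ℚ)) : ℤ) * ((M / mRoot ((c h : ℚ)) : ℕ) : ℤ) = (M : ℤ) := by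
        rw [← Nat.cast_mul, Nat.mul_div_cancel' (hMdvd h)]
      have hmm : (M:ℤ) * k h
          = (mRoot ((c h : ℚ)) : ℤ) * (((M / mRoot ((c h : ℚ)) : ℕ) : ℤ) * k h) := by
        rw [← mul_assoc, hcc]
      rw [hmm]
      conv_rhs => rw [zpow_mul, hbm]
      congr 1
      ring
    rw [Finset.prod_congr rfl hc, Finset.prod_pow, hk, one_pow]
  have hz := hindep _ key
  funext h
  have hzh := congrFun hz h
  simp only [Pi.zero_apply, mul_eq_zero] at hzh
  rcases hzh with h0 | h0
  · exact h0
  · exfalso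
    have : 0 < M / mRoot ((c h : ℚ)) :=
      Nat.div_pos (Nat.le_of_dvd hMpos (hMdvd h)) (m_pos hpos hindep h)
    omega

lemma b_dvd_mem (hpos : ∀ h, (0 : ℚ) < c h)
    (hindep : ∀ l : Fin ν → ℤ, ∏ h, c h ^ l h = 1 → l = 0)
    (k : Fin ν → ℤ) (hd : ∀ h, (mRoot ((c h : ℚ)) : ℤ) ∣ k h) :
    ∏ h, hatRootU (c h) ^ k h ∈ Subgroup.closure ({-1} ∪ Set.range c) := by
  have hch : ∀ h, c h ∈ Subgroup.closure ({-1} ∪ Set.range c) :=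
    fun h => Subgroup.subset_closure (Set.mem_union_right _ ⟨h, rfl⟩)
  refine prod_mem fun h _ => ?_
  obtain ⟨t, ht⟩ := hd h
  have hbm : hatRootU (c h) ^ (mRoot ((c h : ℚ)) : ℤ) = c h := by
    rw [zpow_natCast]; exact (b_spec hpos hindep h).2
  rw [ht, zpow_mul, hbm]
  exact zpow_mem (hch h) t

lemma b_mem_dvd (hpos : ∀ h, (0 : ℚ) < c h)
    (hindep : ∀ l : Fin ν → ℤ, ∏ h, c h ^ l h = 1 → l = 0)
    (k : Fin ν → ℤ)
    (hk : ∏ h, hatRootU (c h) ^ k h ∈ Subgroup.closure ({-1} ∪ Set.range c)) :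
    ∀ h, (mRoot ((c h : ℚ)) : ℤ) ∣ k h := by
  rw [Ggrp_eq_Hgrp, mem_Hgrp] at hk
  obtain ⟨s, l, hl⟩ := hk
  have hbm : ∀ h, hatRootU (c h) ^ (mRoot ((c h : ℚ)) : ℤ) = c h := by
    intro h; rw [zpow_natCast]; exact (b_spec hpos hindep h).2
  have h2 : ∏ h, hatRootU (c h) ^ (2 * k h) = ∏ h, c h ^ (2 * l h) := by
    have e1 : ∏ h, hatRootU (c h) ^ (2 * k h) = (∏ h, hatRootU (c h) ^ k h) ^ (2:ℕ) := by
      rw [← Finset.prod_pow]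
      exact Finset.prod_congr rfl fun h _ => (pow2' _ _).symm
    have e2 : ∏ h, c h ^ (2 * l h) = (∏ h, c h ^ l h) ^ (2:ℕ) := by
      rw [← Finset.prod_pow]
      exact Finset.prod_congr rfl fun h _ => (pow2' _ _).symm
    rw [e1, e2, hl, mul_pow]
    have hsgn : ((-1 : ℚˣ) ^ s) ^ (2:ℕ) = 1 := by
      have : ((-1 : ℚˣ) ^ s) ^ (2:ℕ) = ((-1 : ℚˣ) ^ (2:ℕ)) ^ s := by
        rw [← zpow_natCast ((-1:ℚˣ) ^ s) 2, ← zpow_natCast (-1:ℚˣ) 2, ← zpow_mul, ← zpow_mul,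
          mul_comm]
      rw [this]
      norm_num
    rw [hsgn, one_mul]
  have h3 : ∏ h, c h ^ (2 * l h) = ∏ h, hatRootU (c h) ^ (2 * (mRoot ((c h : ℚ)) : ℤ) * l h) := by
    refine Finset.prod_congr rfl fun h _ => ?_
    have hre : 2 * (mRoot ((c h : ℚ)) : ℤ) * l h
        = (mRoot ((c h : ℚ)) : ℤ) * (2 * l h) := by ring
    rw [hre]
    conv_rhs => rw [zpow_mul, hbm h]
  have h4 : ∏ h, hatRootU (c h) ^ (2 * k h - 2 * (mRoot ((c h : ℚ)) : ℤ) * l h) = 1 := by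
    have e3 : ∏ h, hatRootU (c h) ^ (2 * k h - 2 * (mRoot ((c h : ℚ)) : ℤ) * l h)
        = (∏ h, hatRootU (c h) ^ (2 * k h)) /
          ∏ h, hatRootU (c h) ^ (2 * (mRoot ((c h : ℚ)) : ℤ) * l h) := by
      rw [← Finset.prod_div_distrib]
      exact Finset.prod_congr rfl fun h _ => by rw [zpow_sub, div_eq_mul_inv]
    rw [e3, h2, h3, div_self']
  have h5 := b_indep hpos hindep _ h4
  intro h
  have h6 := congrFun h5 h
  simp only [Pi.zero_apply] at h6
  exact ⟨l h, by linarith⟩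

end Core

section Psi

variable {ν : ℕ} {c : Fin ν → ℚˣ}

lemma zmod_val_congr {n : ℕ} [NeZero n] {x : ZMod n} {a : ℤ} (h : (a : ZMod n) = x) :
    (n:ℤ) ∣ ((x.val : ℤ) - a) := by
  have h1 : (((x.val : ℤ) - a : ℤ) : ZMod n) = 0 := by
    push_cast
    rw [ZMod.natCast_val, ZMod.cast_id, ← h]
    ring
  exact (ZMod.intCast_zmod_eq_zero_iff_dvd _ _).1 h1

lemma val_add_dvd {n : ℕ} [NeZero n] (x y : ZMod n) :
    (n:ℤ) ∣ (((x + y).val : ℤ) - ((x.val : ℤ) + (y.val : ℤ))) := by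
  apply zmod_val_congr
  push_cast
  rw [ZMod.natCast_val, ZMod.natCast_val, ZMod.cast_id, ZMod.cast_id]

lemma mk_prod_congr (hpos : ∀ h, (0 : ℚ) < c h)
    (hindep : ∀ l : Fin ν → ℤ, ∏ h, c h ^ l h = 1 → l = 0) (k k' : Fin ν → ℤ)
    (hd : ∀ h, (mRoot ((c h : ℚ)) : ℤ) ∣ (k' h - k h)) :
    (QuotientGroup.mk (∏ h, hatRootU (c h) ^ k h) :
      ℚˣ ⧸ Subgroup.closure ({-1} ∪ Set.range c)) =
      QuotientGroup.mk (∏ h, hatRootU (c h) ^ k' h) := by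
  rw [QuotientGroup.eq]
  have he : (∏ h, hatRootU (c h) ^ k h)⁻¹ * ∏ h, hatRootU (c h) ^ k' h
      = ∏ h, hatRootU (c h) ^ (k' h - k h) := by
    rw [← Finset.prod_inv_distrib, ← Finset.prod_mul_distrib]
    refine Finset.prod_congr rfl fun h _ => ?_
    rw [zpow_sub]
    exact mul_comm _ _
  rw [he]
  exact b_dvd_mem hpos hindep _ hd

lemma prod_b_pos (hpos : ∀ h, (0 : ℚ) < c h)
    (hindep : ∀ l : Fin ν → ℤ, ∏ h, c h ^ l h = 1 → l = 0) (k : Fin ν → ℤ) :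
    0 < ((∏ h, hatRootU (c h) ^ k h : ℚˣ) : ℚ) := by
  have h1 := map_prod (Units.coeHom ℚ) (fun h => hatRootU (c h) ^ k h) Finset.univ
  simp only [Units.coeHom_apply, Units.val_zpow_eq_zpow_val] at h1
  rw [h1]
  exact Finset.prod_pos fun h _ => zpow_pos ((b_spec hpos hindep h).1) _

lemma prod_c_pos (hpos : ∀ h, (0 : ℚ) < c h) (l : Fin ν → ℤ) :
    0 < ((∏ h, c h ^ l h : ℚˣ) : ℚ) := by
  have h1 := map_prod (Units.coeHom ℚ) (fun h => c h ^ l h) Finset.univ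
  simp only [Units.coeHom_apply, Units.val_zpow_eq_zpow_val] at h1
  rw [h1]
  exact Finset.prod_pos fun h _ => zpow_pos (hpos h) _

lemma sign_cancel {s : ℤ} {u v : ℚˣ} (hu : 0 < (u:ℚ)) (hv : 0 < (v:ℚ))
    (h : u = (-1) ^ s * v) : u = v := by
  rcases Int.even_or_odd s with he | ho
  · rwa [he.neg_one_zpow, one_mul] at h
  · exfalso
    obtain ⟨t, rfl⟩ := ho
    have he2 : Even (2 * t) := ⟨t, two_mul t⟩
    rw [zpow_add, he2.neg_one_zpow, one_mul, zpow_one, neg_one_mul] at h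
    rw [h, Units.val_neg] at hu
    linarith

lemma mk_prod_b_torsion (hpos : ∀ h, (0 : ℚ) < c h)
    (hindep : ∀ l : Fin ν → ℤ, ∏ h, c h ^ l h = 1 → l = 0) (k : Fin ν → ℤ) :
    (QuotientGroup.mk (∏ h, hatRootU (c h) ^ k h) :
      ℚˣ ⧸ Subgroup.closure ({-1} ∪ Set.range c)) ∈
      CommGroup.torsion (ℚˣ ⧸ Subgroup.closure ({-1} ∪ Set.range c)) := by
  rw [CommGroup.mem_torsion, isOfFinOrder_iff_pow_eq_one]
  have hMpos : 0 < ∏ h, mRoot ((c h : ℚ)) :=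
    Finset.prod_pos fun h _ => m_pos hpos hindep h
  refine ⟨∏ h, mRoot ((c h : ℚ)), hMpos, ?_⟩
  rw [← QuotientGroup.mk_pow]
  have he : (∏ h, hatRootU (c h) ^ k h) ^ (∏ h, mRoot ((c h : ℚ)))
      = ∏ h, hatRootU (c h) ^ ((((∏ h', mRoot ((c h' : ℚ)) : ℕ)) : ℤ) * k h) := by
    rw [← Finset.prod_pow]
    exact Finset.prod_congr rfl fun h _ => powM' _ _ _
  rw [he, QuotientGroup.eq_one_iff]
  refine b_dvd_mem hpos hindep _ fun h => Dvd.dvd.mul_right ?_ _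
  exact_mod_cast Int.natCast_dvd_natCast.2 (Finset.dvd_prod_of_mem _ (Finset.mem_univ h))

noncomputable def psiHom (hpos : ∀ h, (0 : ℚ) < c h)
    (hindep : ∀ l : Fin ν → ℤ, ∏ h, c h ^ l h = 1 → l = 0) :
    Multiplicative (∀ h : Fin ν, ZMod (mRoot ((c h : ℚ)))) →*
      CommGroup.torsion (ℚˣ ⧸ Subgroup.closure ({-1} ∪ Set.range c)) where
  toFun k := ⟨QuotientGroup.mk (∏ h, hatRootU (c h) ^ (((Multiplicative.toAdd k) h).val : ℤ)),
    mk_prod_b_torsion hpos hindep _⟩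
  map_one' := by
    apply Subtype.ext
    show (QuotientGroup.mk _ : ℚˣ ⧸ Subgroup.closure ({-1} ∪ Set.range c)) = 1
    rw [QuotientGroup.eq_one_iff]
    have he : ∀ h ∈ Finset.univ,
        hatRootU (c h) ^ ((((Multiplicative.toAdd (1 : Multiplicative (∀ h : Fin ν, ZMod (mRoot ((c h : ℚ)))))) h).val : ℤ)) = 1 := by
      intro h _
      haveI : NeZero (mRoot ((c h : ℚ))) := ⟨by have := m_pos hpos hindep h; omega⟩
      show hatRootU (c h) ^ (((0 : ZMod (mRoot ((c h : ℚ)))).val : ℤ)) = 1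
      rw [ZMod.val_zero]
      norm_num
    rw [Finset.prod_congr rfl he, Finset.prod_const_one]
    exact one_mem _
  map_mul' := by
    intro k k'
    apply Subtype.ext
    show (QuotientGroup.mk _ : ℚˣ ⧸ Subgroup.closure ({-1} ∪ Set.range c)) =
      QuotientGroup.mk _ * QuotientGroup.mk _
    rw [← QuotientGroup.mk_mul, ← Finset.prod_mul_distrib]
    have he : ∀ h ∈ Finset.univ,
        hatRootU (c h) ^ (((Multiplicative.toAdd k) h).val : ℤ) *
          hatRootU (c h) ^ (((Multiplicative.toAdd k') h).val : ℤ)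
        = hatRootU (c h) ^ ((((Multiplicative.toAdd k) h).val : ℤ) +
            (((Multiplicative.toAdd k') h).val : ℤ)) := by
      intro h _
      rw [zpow_add]
    rw [Finset.prod_congr rfl he]
    apply mk_prod_congr hpos hindep
    intro h
    haveI : NeZero (mRoot ((c h : ℚ))) := ⟨by have := m_pos hpos hindep h; omega⟩
    have hv := dvd_neg.2 (val_add_dvd ((Multiplicative.toAdd k) h) ((Multiplicative.toAdd k') h))
    have hre : -((((Multiplicative.toAdd k h + Multiplicative.toAdd k' h)).val : ℤ) -
        (((Multiplicative.toAdd k h).val : ℤ) + ((Multiplicative.toAdd k' h).val : ℤ)))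
        = ((((Multiplicative.toAdd k h).val : ℤ) + ((Multiplicative.toAdd k' h).val : ℤ)) -
          (((Multiplicative.toAdd k h + Multiplicative.toAdd k' h)).val : ℤ)) := by ring
    rw [hre] at hv
    simpa [toAdd_mul] using hv

lemma psiHom_injective (hpos : ∀ h, (0 : ℚ) < c h)
    (hindep : ∀ l : Fin ν → ℤ, ∏ h, c h ^ l h = 1 → l = 0) :
    Function.Injective (psiHom hpos hindep) := by
  rw [injective_iff_map_eq_one]
  intro k hk
  have hk' : (QuotientGroup.mk (∏ h, hatRootU (c h) ^ (((Multiplicative.toAdd k) h).val : ℤ)) :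
      ℚˣ ⧸ Subgroup.closure ({-1} ∪ Set.range c)) = 1 := by
    exact congrArg Subtype.val hk
  rw [QuotientGroup.eq_one_iff] at hk'
  have hd := b_mem_dvd hpos hindep _ hk'
  have hz : Multiplicative.toAdd k = 0 := by
    funext h
    haveI : NeZero (mRoot ((c h : ℚ))) := ⟨by have := m_pos hpos hindep h; omega⟩
    have hdh := hd h
    have hval : ((Multiplicative.toAdd k) h).val < mRoot ((c h : ℚ)) := ZMod.val_lt _
    have hval0 : ((Multiplicative.toAdd k) h).val = 0 := by
      by_contra hcon
      have hpos' : (0:ℤ) < (((Multiplicative.toAdd k) h).val : ℤ) := by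
        exact_mod_cast Nat.pos_of_ne_zero hcon
      have h1 := Int.le_of_dvd hpos' hdh
      have h2 : (((Multiplicative.toAdd k) h).val : ℤ) < (mRoot ((c h : ℚ)) : ℤ) := by
        exact_mod_cast hval
      omega
    exact (ZMod.val_eq_zero _).1 hval0
  rwa [toAdd_eq_zero] at hz

end Psi

section Final

variable {ν : ℕ} {c : Fin ν → ℚˣ}

lemma psiHom_val (hpos : ∀ h, (0 : ℚ) < c h)
    (hindep : ∀ l : Fin ν → ℤ, ∏ h, c h ^ l h = 1 → l = 0)
    (k : Multiplicative (∀ h : Fin ν, ZMod (mRoot ((c h : ℚ))))) :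
    ((psiHom hpos hindep k : CommGroup.torsion (ℚˣ ⧸ Subgroup.closure ({-1} ∪ Set.range c))) :
      ℚˣ ⧸ Subgroup.closure ({-1} ∪ Set.range c)) =
      QuotientGroup.mk (∏ h, hatRootU (c h) ^ (((Multiplicative.toAdd k) h).val : ℤ)) := rfl

lemma psiHom_single (hpos : ∀ h, (0 : ℚ) < c h)
    (hindep : ∀ l : Fin ν → ℤ, ∏ h, c h ^ l h = 1 → l = 0) (h : Fin ν) :
    ((psiHom hpos hindep (Multiplicative.ofAdd (Pi.single h (1 : ZMod (mRoot ((c h : ℚ)))))) :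
        CommGroup.torsion (ℚˣ ⧸ Subgroup.closure ({-1} ∪ Set.range c))) :
      ℚˣ ⧸ Subgroup.closure ({-1} ∪ Set.range c)) =
      QuotientGroup.mk (hatRootU (c h)) := by
  rw [psiHom_val]
  simp only [toAdd_ofAdd]
  have step : (QuotientGroup.mk (∏ h', hatRootU (c h') ^
      (((Pi.single h (1 : ZMod (mRoot ((c h : ℚ)))) : ∀ h' : Fin ν, ZMod (mRoot ((c h' : ℚ))))
        h').val : ℤ)) : ℚˣ ⧸ Subgroup.closure ({-1} ∪ Set.range c)) =
      QuotientGroup.mk (∏ h', hatRootU (c h') ^ ((Pi.single h 1 : Fin ν → ℤ) h')) := by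
    apply mk_prod_congr hpos hindep
    intro h'
    haveI : NeZero (mRoot ((c h' : ℚ))) := ⟨by have := m_pos hpos hindep h'; omega⟩
    rcases eq_or_ne h' h with rfl | hne
    · simp only [Pi.single_eq_same]
      have := dvd_neg.2 (zmod_val_congr (n := mRoot ((c h' : ℚ)))
        (x := (1 : ZMod (mRoot ((c h' : ℚ))))) (a := 1) (by norm_num))
      simpa using this
    · simp only [Pi.single_eq_of_ne hne]
      simp [ZMod.val_zero]
  rw [step, prod_single_exp, zpow_one]

lemma psiHom_surjective (hpos : ∀ h, (0 : ℚ) < c h)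
    (hindep : ∀ l : Fin ν → ℤ, ∏ h, c h ^ l h = 1 → l = 0)
    (ha : ∀ (l : Fin ν → ℤ) (x : ℚˣ), (0 : ℚ) < x → x ≠ 1 → ∏ h, c h ^ l h = x →
        ∃ l' : Fin ν → ℤ, hatRootU x = ∏ h, hatRootU (c h) ^ l' h) :
    Function.Surjective (psiHom hpos hindep) := by
  rintro ⟨q, hq⟩
  obtain ⟨w0, rfl⟩ := QuotientGroup.mk_surjective q
  suffices hsuf : ∃ k, ((psiHom hpos hindep k :
      CommGroup.torsion (ℚˣ ⧸ Subgroup.closure ({-1} ∪ Set.range c))) :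
      ℚˣ ⧸ Subgroup.closure ({-1} ∪ Set.range c)) = QuotientGroup.mk w0 by
    obtain ⟨k, hk⟩ := hsuf
    exact ⟨k, Subtype.ext hk⟩
  obtain ⟨w, hwpos, hww⟩ : ∃ w : ℚˣ, 0 < (w:ℚ) ∧
      (QuotientGroup.mk w : ℚˣ ⧸ Subgroup.closure ({-1} ∪ Set.range c)) = QuotientGroup.mk w0 := by
    rcases lt_or_gt_of_ne (Units.ne_zero w0) with hneg | hposw
    · refine ⟨-w0, ?_, ?_⟩
      · rw [Units.val_neg]; linarith
      · rw [QuotientGroup.eq]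
        have hkey : (-w0)⁻¹ * w0 = -1 := by
          rw [show (-w0) = (-1 : ℚˣ) * w0 from (neg_one_mul w0).symm]
          have h1 : ((-1 : ℚˣ) * w0)⁻¹ * w0 = (-1 : ℚˣ)⁻¹ := by
            rw [mul_inv_rev, mul_comm (w0⁻¹) ((-1 : ℚˣ)⁻¹), mul_assoc, inv_mul_cancel, mul_one]
          have h2 : ((-1 : ℚˣ))⁻¹ = -1 :=
            inv_eq_of_mul_eq_one_right (by rw [neg_mul_neg, one_mul])
          rw [h1, h2]
        rw [hkey]
        exact Subgroup.subset_closure (Set.mem_union_left _ rfl)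
    · exact ⟨w0, hposw, rfl⟩
  rw [← hww]
  rw [← hww] at hq
  rw [CommGroup.mem_torsion, isOfFinOrder_iff_pow_eq_one] at hq
  obtain ⟨n, hn, hpow⟩ := hq
  rw [← QuotientGroup.mk_pow, QuotientGroup.eq_one_iff, Ggrp_eq_Hgrp, mem_Hgrp] at hpow
  obtain ⟨s, l, hsl⟩ := hpow
  have hwn_pos : 0 < ((w ^ n : ℚˣ) : ℚ) := by
    rw [Units.val_pow_eq_pow_val]; positivity
  have hx : w ^ n = ∏ h, c h ^ l h := sign_cancel hwn_pos (prod_c_pos hpos l) hsl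
  by_cases hw1 : w = 1
  · refine ⟨1, ?_⟩
    rw [map_one]
    rw [hw1]
    rfl
  · have hxne : w ^ n ≠ 1 := by
      intro hcon
      apply hw1
      apply Units.ext
      refine rat_pow_left_inj hwpos one_pos hn.ne' ?_
      rw [← Units.val_pow_eq_pow_val, hcon]
      norm_num
    obtain ⟨l', hl'⟩ := ha l (w ^ n) hwn_pos hxne hx.symm
    obtain ⟨hdvd, hweq⟩ := root_dvd_u hwn_pos hxne hn.ne' hwpos rfl
    set d : ℕ := mRoot (((w ^ n : ℚˣ) : ℚ)) / n with hd
    have hw2 : w = ∏ h, hatRootU (c h) ^ (l' h * (d : ℤ)) := by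
      rw [hweq, hl', ← Finset.prod_pow]
      refine Finset.prod_congr rfl fun h _ => ?_
      rw [powM']
      congr 1
      ring
    refine ⟨Multiplicative.ofAdd (fun h => ((l' h * (d : ℤ) : ℤ) : ZMod (mRoot ((c h : ℚ))))), ?_⟩
    rw [psiHom_val]
    conv_rhs => rw [hw2]
    apply mk_prod_congr hpos hindep
    intro h
    haveI : NeZero (mRoot ((c h : ℚ))) := ⟨by have := m_pos hpos hindep h; omega⟩
    simp only [toAdd_ofAdd]
    have := dvd_neg.2 (zmod_val_congr (n := mRoot ((c h : ℚ)))
      (x := ((l' h * (d : ℤ) : ℤ) : ZMod (mRoot ((c h : ℚ))))) (a := l' h * (d : ℤ)) rfl)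
    simpa using this

end Final

theorem stmt6 (ν : ℕ) (c : Fin ν → ℚˣ) (hpos : ∀ h, (0 : ℚ) < c h)
    (hindep : ∀ l : Fin ν → ℤ, ∏ h, c h ^ l h = 1 → l = 0) :
    (∀ (l : Fin ν → ℤ) (x : ℚˣ), (0 : ℚ) < x → x ≠ 1 → ∏ h, c h ^ l h = x →
        ∃ l' : Fin ν → ℤ, hatRootU x = ∏ h, hatRootU (c h) ^ l' h) ↔
      (∃ e : CommGroup.torsion (ℚˣ ⧸ Subgroup.closure ({-1} ∪ Set.range c)) ≃*
          Multiplicative (∀ h : Fin ν, ZMod (mRoot (c h : ℚ))),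
        ∀ h : Fin ν,
          ((e.symm (Multiplicative.ofAdd
              (Pi.single h (1 : ZMod (mRoot (c h : ℚ))))) :
            CommGroup.torsion (ℚˣ ⧸ Subgroup.closure ({-1} ∪ Set.range c))) :
              ℚˣ ⧸ Subgroup.closure ({-1} ∪ Set.range c)) =
            QuotientGroup.mk (hatRootU (c h))) := by
  constructor
  · intro ha
    refine ⟨(MulEquiv.ofBijective (psiHom hpos hindep)
      ⟨psiHom_injective hpos hindep, psiHom_surjective hpos hindep ha⟩).symm, fun h => ?_⟩
    rw [MulEquiv.symm_symm]
    exact psiHom_single hpos hindep h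
  · rintro ⟨e, he⟩ l x hx hx1 hlx
    have hx1' : (x:ℚ) ≠ 1 := fun hh => hx1 (Units.ext (by simpa using hh))
    have hxG : x ∈ Subgroup.closure ({-1} ∪ Set.range c) := by
      rw [← hlx]
      have hch : ∀ h, c h ∈ Subgroup.closure ({-1} ∪ Set.range c) :=
        fun h => Subgroup.subset_closure (Set.mem_union_right _ ⟨h, rfl⟩)
      exact prod_mem fun h _ => zpow_mem (hch h) _
    obtain ⟨hhpos, hhpow⟩ := hatRootU_pos_pow hx hx1
    have hm1 : 1 ≤ mRoot ((x:ℚ)) := (mRoot_facts hx hx1').2.1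
    have htor : (QuotientGroup.mk (hatRootU x) :
        ℚˣ ⧸ Subgroup.closure ({-1} ∪ Set.range c)) ∈
        CommGroup.torsion (ℚˣ ⧸ Subgroup.closure ({-1} ∪ Set.range c)) := by
      rw [CommGroup.mem_torsion, isOfFinOrder_iff_pow_eq_one]
      exact ⟨mRoot ((x:ℚ)), by omega,
        by rw [← QuotientGroup.mk_pow, hhpow, QuotientGroup.eq_one_iff]; exact hxG⟩
    set t : CommGroup.torsion (ℚˣ ⧸ Subgroup.closure ({-1} ∪ Set.range c)) :=
      ⟨_, htor⟩ with hts
    set k : ∀ h : Fin ν, ZMod (mRoot ((c h : ℚ))) := Multiplicative.toAdd (e t) with hks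
    have hsum : ∑ h, (k h).val •
        (Pi.single h (1 : ZMod (mRoot ((c h : ℚ)))) :
          ∀ h' : Fin ν, ZMod (mRoot ((c h' : ℚ)))) = k := by
      have hterm : ∀ h, (k h).val •
          (Pi.single h (1 : ZMod (mRoot ((c h : ℚ)))) :
            ∀ h' : Fin ν, ZMod (mRoot ((c h' : ℚ)))) = Pi.single h (k h) := by
        intro h
        haveI : NeZero (mRoot ((c h : ℚ))) := ⟨by have := m_pos hpos hindep h; omega⟩
        rw [← Pi.single_smul]
        congr 1
        rw [nsmul_eq_mul, mul_one, ZMod.natCast_val, ZMod.cast_id]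
      rw [Finset.sum_congr rfl (fun h _ => hterm h), Finset.univ_sum_single]
    have hofAdd : Multiplicative.ofAdd k =
        ∏ h, (Multiplicative.ofAdd (Pi.single h (1 : ZMod (mRoot ((c h : ℚ)))) :
          Multiplicative (∀ h' : Fin ν, ZMod (mRoot ((c h' : ℚ)))))) ^ (k h).val := by
      conv_lhs => rw [← hsum]
      rw [ofAdd_sum]
      exact Finset.prod_congr rfl fun h _ => ofAdd_nsmul _ _
    have ht2 : t = e.symm (Multiplicative.ofAdd k) := by
      rw [hks, ofAdd_toAdd, MulEquiv.symm_apply_apply]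
    have hdec : ((t : CommGroup.torsion (ℚˣ ⧸ Subgroup.closure ({-1} ∪ Set.range c))) :
        ℚˣ ⧸ Subgroup.closure ({-1} ∪ Set.range c)) =
        QuotientGroup.mk (∏ h, hatRootU (c h) ^ (((k h).val : ℕ))) := by
      rw [ht2, hofAdd, map_prod]
      rw [Finset.prod_congr rfl fun h (_ : h ∈ Finset.univ) => map_pow e.symm _ ((k h).val)]
      rw [SubmonoidClass.coe_finset_prod]
      rw [Finset.prod_congr rfl fun h (_ : h ∈ Finset.univ) =>
        (SubmonoidClass.coe_pow (e.symm (Multiplicative.ofAdd (Pi.single h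
          (1 : ZMod (mRoot ((c h : ℚ))))))) ((k h).val))]
      rw [Finset.prod_congr rfl fun h (_ : h ∈ Finset.univ) => by rw [he h]]
      rw [QuotientGroup.mk_prod]
      exact Finset.prod_congr rfl fun h _ => (QuotientGroup.mk_pow _ _ _).symm
    have hmk : (QuotientGroup.mk (hatRootU x) :
        ℚˣ ⧸ Subgroup.closure ({-1} ∪ Set.range c)) =
        QuotientGroup.mk (∏ h, hatRootU (c h) ^ (((k h).val : ℤ))) := by
      have hconv : (∏ h, hatRootU (c h) ^ (((k h).val : ℤ)))
          = ∏ h, hatRootU (c h) ^ ((k h).val) :=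
        Finset.prod_congr rfl fun h _ => zpow_natCast _ _
      rw [hconv, ← hdec]
    rw [QuotientGroup.eq, Ggrp_eq_Hgrp, mem_Hgrp] at hmk
    obtain ⟨s, l'', hsl⟩ := hmk
    have hB : ∏ h, hatRootU (c h) ^ (((k h).val : ℤ) - (mRoot ((c h : ℚ)) : ℤ) * l'' h)
        = (∏ h, hatRootU (c h) ^ (((k h).val : ℤ))) * (∏ h, c h ^ l'' h)⁻¹ := by
      rw [← Finset.prod_inv_distrib, ← Finset.prod_mul_distrib]
      refine Finset.prod_congr rfl fun h _ => ?_
      rw [zpow_sub]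
      congr 1
      rw [zpow_mul, (by rw [zpow_natCast]; exact (b_spec hpos hindep h).2 :
        hatRootU (c h) ^ ((mRoot ((c h : ℚ)) : ℤ)) = c h)]
    have hhat : hatRootU x = (-1) ^ (-s) *
        ∏ h, hatRootU (c h) ^ (((k h).val : ℤ) - (mRoot ((c h : ℚ)) : ℤ) * l'' h) := by
      rw [hB]
      have hstep : hatRootU x = (∏ h, hatRootU (c h) ^ (((k h).val : ℤ))) *
          ((-1) ^ s * ∏ h, c h ^ l'' h)⁻¹ := by
        rw [← hsl]
        group
      rw [hstep, mul_inv, zpow_neg]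
      exact mul_left_comm _ _ _
    exact ⟨(fun h => ((k h).val : ℤ) - (mRoot ((c h : ℚ)) : ℤ) * l'' h),
      sign_cancel hhpos (prod_b_pos hpos hindep _) hhat⟩
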